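/- (Best exit with respect to an over-approximation dominates the end component, Lemma B.1.) Fix a finite stochastic game with partition (F, Z, S?) and value V = lfp B. Let Y ⊆ S? be an end component having at least one Maximizer exit, and let f : S → [0,1] satisfy f(s) ≥ V(s) for all s ∈ S. Let (s_f, a_f) be a Maximizer best exit of Y according to f. Then for every s ∈ Y: V(s) ≤ ∑_{t} δ(s_f, a_f, t)·f(t). -/

import Mathlib

/-- A finite (turn-based simple) stochastic game with a partition of the state
space into Maximizer states `SBox` (the rest being Minimizer states), target
states `F`, sink states `Z`, and the remaining unknown states `S \ (F ∪ Z)`. -/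
structure SG (S A : Type) [Fintype S] [DecidableEq S] where
  /-- Maximizer states; all other states belong to Minimizer. -/
  SBox : Finset S
  /-- Target states. -/
  F : Finset S
  /-- Sink states. -/
  Z : Finset S
  hFZ : Disjoint F Z
  /-- Available actions (a nonempty finite set in each state). -/
  Av : S → Finset A
  Av_ne : ∀ s, (Av s).Nonempty
  /-- Transition probabilities. -/
  δ : S → A → S → ℝ
  δ_nonneg : ∀ s a s', 0 ≤ δ s a s'
  δ_sum : ∀ s, ∀ a ∈ Av s, ∑ s', δ s a s' = 1

namespace SG

variable {S A : Type} [Fintype S] [DecidableEq S]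

/-- The unknown states `S? = S \ (F ∪ Z)`. -/
def SUnk (G : SG S A) : Finset S := Finset.univ \ (G.F ∪ G.Z)

/-- The Bellman operator: `1` on targets, `0` on sinks, max over available actions
in Maximizer states and min over available actions in Minimizer states. -/
noncomputable def bellman (G : SG S A) (g : S → ℝ) : S → ℝ := fun s =>
  if s ∈ G.F then 1
  else if s ∈ G.Z then 0
  else if s ∈ G.SBox then (G.Av s).sup' (G.Av_ne s) fun a => ∑ s', G.δ s a s' * g s'
  else (G.Av s).inf' (G.Av_ne s) fun a => ∑ s', G.δ s a s' * g s'

/-- `V` is the value of the game: the least fixed point of the Bellman operator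
among functions `S → [0,1]`. -/
def IsValue (G : SG S A) (V : S → ℝ) : Prop :=
  (∀ s, V s ∈ Set.Icc (0 : ℝ) 1) ∧ G.bellman V = V ∧
    ∀ g : S → ℝ, (∀ s, g s ∈ Set.Icc (0 : ℝ) 1) → G.bellman g = g → ∀ s, V s ≤ g s

/-- `T` is an end component: there is a nonempty set of actions `B'` available in `T`
that stays inside `T`, and using which every state of `T` can reach every other. -/
def IsEC (G : SG S A) (T : Set S) : Prop :=
  T.Nonempty ∧ ∃ B' : Set A, B'.Nonempty ∧ (B' ⊆ ⋃ s ∈ T, (G.Av s : Set A)) ∧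
    (∀ s ∈ T, ∀ a ∈ B', a ∈ G.Av s → ∀ s', 0 < G.δ s a s' → s' ∈ T) ∧
    (∀ s ∈ T, ∀ s' ∈ T, Relation.ReflTransGen
      (fun x y => x ∈ T ∧ ∃ a ∈ B', a ∈ G.Av x ∧ 0 < G.δ x a y) s s')

end SG


section Aux

open Filter Topology

variable {S A : Type} [Fintype S] [DecidableEq S]

lemma SG.bellman_mono (G : SG S A) {g h : S → ℝ} (hgh : ∀ s, g s ≤ h s) (s : S) :
    G.bellman g s ≤ G.bellman h s := by
  have hsum : ∀ a, ∑ t, G.δ s a t * g t ≤ ∑ t, G.δ s a t * h t := fun a =>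
    Finset.sum_le_sum fun t _ => mul_le_mul_of_nonneg_left (hgh t) (G.δ_nonneg s a t)
  unfold SG.bellman
  split_ifs
  · exact le_rfl
  · exact le_rfl
  · exact Finset.sup'_mono_fun fun a _ => hsum a
  · exact Finset.le_inf' _ _ fun a ha => le_trans (Finset.inf'_le _ ha) (hsum a)

lemma SG.bellman_mem_Icc (G : SG S A) {g : S → ℝ} (hg : ∀ s, g s ∈ Set.Icc (0:ℝ) 1) (s : S) :
    G.bellman g s ∈ Set.Icc (0:ℝ) 1 := by
  have hsum : ∀ a ∈ G.Av s, ∑ t, G.δ s a t * g t ∈ Set.Icc (0:ℝ) 1 := by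
    intro a ha
    constructor
    · exact Finset.sum_nonneg fun t _ => mul_nonneg (G.δ_nonneg s a t) (hg t).1
    · calc ∑ t, G.δ s a t * g t ≤ ∑ t, G.δ s a t * 1 :=
            Finset.sum_le_sum fun t _ => mul_le_mul_of_nonneg_left (hg t).2 (G.δ_nonneg s a t)
        _ = 1 := by simpa using G.δ_sum s a ha
  unfold SG.bellman
  split_ifs
  · exact ⟨zero_le_one, le_rfl⟩
  · exact ⟨le_rfl, zero_le_one⟩
  · obtain ⟨a, ha⟩ := G.Av_ne s
    exact ⟨le_trans (hsum a ha).1 (Finset.le_sup' (fun b => ∑ t, G.δ s b t * g t) ha),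
      Finset.sup'_le _ _ fun b hb => (hsum b hb).2⟩
  · obtain ⟨a, ha⟩ := G.Av_ne s
    exact ⟨Finset.le_inf' _ _ fun b hb => (hsum b hb).1,
      le_trans (Finset.inf'_le _ ha) (hsum a ha).2⟩

lemma tendsto_finset_sup'_aux {ι : Type} {F : ℕ → ι → ℝ} {g : ι → ℝ} {t : Finset ι}
    (ht : t.Nonempty)
    (h : ∀ i ∈ t, Filter.Tendsto (fun n => F n i) Filter.atTop (nhds (g i))) :
    Filter.Tendsto (fun n => t.sup' ht (F n)) Filter.atTop (nhds (t.sup' ht g)) := by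
  induction ht using Finset.Nonempty.cons_induction with
  | singleton i => simpa using h i (Finset.mem_singleton_self i)
  | cons i s hi hs ih =>
    simp only [Finset.sup'_cons hs]
    exact Filter.Tendsto.max (h i (Finset.mem_cons_self _ _))
      (ih fun j hj => h j (Finset.mem_cons_of_mem hj))

lemma tendsto_finset_inf'_aux {ι : Type} {F : ℕ → ι → ℝ} {g : ι → ℝ} {t : Finset ι}
    (ht : t.Nonempty)
    (h : ∀ i ∈ t, Filter.Tendsto (fun n => F n i) Filter.atTop (nhds (g i))) :
    Filter.Tendsto (fun n => t.inf' ht (F n)) Filter.atTop (nhds (t.inf' ht g)) := by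
  induction ht using Finset.Nonempty.cons_induction with
  | singleton i => simpa using h i (Finset.mem_singleton_self i)
  | cons i s hi hs ih =>
    simp only [Finset.inf'_cons hs]
    exact Filter.Tendsto.min (h i (Finset.mem_cons_self _ _))
      (ih fun j hj => h j (Finset.mem_cons_of_mem hj))

end Aux

/-- Best exit with respect to an over-approximation dominates the end component
(Lem. B.1): if `Y ⊆ S?` is an end component with a Maximizer exit, `f : S → [0,1]`
over-approximates the value `V`, and `(s_f, a_f)` is a Maximizer best exit of `Y`
according to `f`, then for every `s ∈ Y`, `V(s) ≤ ∑_t δ(s_f,a_f,t)·f(t)`. -/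
theorem svi_best_exit_dominates {S A : Type} [Fintype S] [DecidableEq S]
    (G : SG S A) (V : S → ℝ) (hV : G.IsValue V)
    (Y : Set S) (hYsub : Y ⊆ (↑G.SUnk : Set S)) (hEC : G.IsEC Y)
    (f : S → ℝ) (hf01 : ∀ s, f s ∈ Set.Icc (0 : ℝ) 1) (hfV : ∀ s, V s ≤ f s)
    (sf : S) (af : A)
    (hsfY : sf ∈ Y) (hsfBox : sf ∈ G.SBox) (hafAv : af ∈ G.Av sf)
    (hafExit : ∃ t, 0 < G.δ sf af t ∧ t ∉ Y)
    (hbest : ∀ s ∈ Y, s ∈ G.SBox → ∀ a ∈ G.Av s, (∃ t, 0 < G.δ s a t ∧ t ∉ Y) →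
      ∑ t, G.δ s a t * f t ≤ ∑ t, G.δ sf af t * f t) :
    ∀ s ∈ Y, V s ≤ ∑ t, G.δ sf af t * f t := by
  classical
  open Filter Topology in
  obtain ⟨hYne, B', hB'ne, hB'sub, hstayY, hconn⟩ := hEC
  set c : ℝ := ∑ t, G.δ sf af t * f t with hc
  have hc0 : 0 ≤ c :=
    Finset.sum_nonneg fun t _ => mul_nonneg (G.δ_nonneg _ _ _) (hf01 t).1
  -- every state of Y has an available action from B'
  have hact : ∀ s ∈ Y, ∃ a ∈ B', a ∈ G.Av s := by
    intro s hs
    obtain ⟨b, hb⟩ := hB'ne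
    have hbU := hB'sub hb
    simp only [Set.mem_iUnion, Finset.coe_sort_coe, Finset.mem_coe] at hbU
    obtain ⟨s₀, hs₀Y, hs₀Av⟩ := hbU
    rcases (hconn s hs s₀ hs₀Y).cases_head with heq | ⟨y, hstep, _⟩
    · exact ⟨b, hb, heq ▸ hs₀Av⟩
    · obtain ⟨_, a, haB, haAv, _⟩ := hstep
      exact ⟨a, haB, haAv⟩
  have hFZ : ∀ s ∈ Y, s ∉ G.F ∧ s ∉ G.Z := by
    intro s hs
    have h := hYsub hs
    simp only [SG.SUnk, Finset.coe_sdiff, Finset.coe_univ, Set.mem_diff, Set.mem_univ,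
      true_and, Finset.coe_union, Set.mem_union, Finset.mem_coe, not_or] at h
    exact h
  -- the Kleene iterates of the Bellman operator from 0
  set x : ℕ → S → ℝ := fun n => G.bellman^[n] (fun _ => 0) with hxdef
  have hx0 : ∀ s, x 0 s = 0 := fun s => rfl
  have hxsucc : ∀ n s, x (n+1) s = G.bellman (x n) s := by
    intro n s
    simp only [hxdef, Function.iterate_succ_apply']
  have hx01 : ∀ n s, x n s ∈ Set.Icc (0:ℝ) 1 := by
    intro n
    induction n with
    | zero => intro s; rw [hx0]; exact ⟨le_rfl, zero_le_one⟩
    | succ n ih => intro s; rw [hxsucc]; exact G.bellman_mem_Icc ih s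
  have hxstep : ∀ n s, x n s ≤ x (n+1) s := by
    intro n
    induction n with
    | zero =>
      intro s; rw [hx0, hxsucc]
      exact (G.bellman_mem_Icc (fun t => ⟨le_rfl, zero_le_one⟩) s).1
    | succ n ih =>
      intro s; rw [hxsucc, hxsucc]
      exact G.bellman_mono ih s
  have hxmono : ∀ s, Monotone fun n => x n s := fun s =>
    monotone_nat_of_le_succ fun n => hxstep n s
  have hxV : ∀ n s, x n s ≤ V s := by
    intro n
    induction n with
    | zero => intro s; rw [hx0]; exact (hV.1 s).1
    | succ n ih =>
      intro s; rw [hxsucc]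
      calc G.bellman (x n) s ≤ G.bellman V s := G.bellman_mono ih s
        _ = V s := congrFun hV.2.1 s
  have hbdd : ∀ s, BddAbove (Set.range fun n => x n s) := by
    intro s
    refine ⟨1, ?_⟩
    rintro _ ⟨n, rfl⟩
    exact (hx01 n s).2
  set L : S → ℝ := fun s => ⨆ n, x n s with hLdef
  have hLt : ∀ s, Filter.Tendsto (fun n => x n s) Filter.atTop (nhds (L s)) := fun s =>
    tendsto_atTop_ciSup (hxmono s) (hbdd s)
  have hL01 : ∀ s, L s ∈ Set.Icc (0:ℝ) 1 := by
    intro s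
    constructor
    · calc (0:ℝ) = x 0 s := (hx0 s).symm
        _ ≤ L s := le_ciSup (hbdd s) 0
    · exact ciSup_le fun n => (hx01 n s).2
  have hfix : G.bellman L = L := by
    funext s
    have h1 : Filter.Tendsto (fun n => G.bellman (x n) s) Filter.atTop (nhds (L s)) := by
      have h := (hLt s).comp (Filter.tendsto_add_atTop_nat 1)
      exact h.congr fun n => hxsucc n s
    have h2 : Filter.Tendsto (fun n => G.bellman (x n) s) Filter.atTop
        (nhds (G.bellman L s)) := by
      by_cases hF : s ∈ G.F
      · simp only [SG.bellman, if_pos hF]; exact tendsto_const_nhds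
      · by_cases hZ : s ∈ G.Z
        · simp only [SG.bellman, if_neg hF, if_pos hZ]; exact tendsto_const_nhds
        · by_cases hB : s ∈ G.SBox
          · simp only [SG.bellman, if_neg hF, if_neg hZ, if_pos hB]
            exact tendsto_finset_sup'_aux (G.Av_ne s) fun a _ =>
              tendsto_finset_sum _ fun t _ => (hLt t).const_mul _
          · simp only [SG.bellman, if_neg hF, if_neg hZ, if_neg hB]
            exact tendsto_finset_inf'_aux (G.Av_ne s) fun a _ =>
              tendsto_finset_sum _ fun t _ => (hLt t).const_mul _
    exact tendsto_nhds_unique h2 h1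
  have hVL : ∀ s, V s ≤ L s := hV.2.2 L hL01 hfix
  -- the key induction: on Y, each iterate is bounded by the best exit value c
  have hkey : ∀ n, ∀ s ∈ Y, x n s ≤ c := by
    intro n
    induction n with
    | zero => intro s _; rw [hx0]; exact hc0
    | succ n ih =>
      intro s hs
      obtain ⟨hsF, hsZ⟩ := hFZ s hs
      rw [hxsucc]
      have hin : ∀ a ∈ G.Av s, (∀ t, 0 < G.δ s a t → t ∈ Y) →
          ∑ t, G.δ s a t * x n t ≤ c := by
        intro a ha hpost
        calc ∑ t, G.δ s a t * x n t ≤ ∑ t, G.δ s a t * c := by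
              apply Finset.sum_le_sum
              intro t _
              rcases lt_or_eq_of_le (G.δ_nonneg s a t) with hpos | h0
              · exact mul_le_mul_of_nonneg_left (ih t (hpost t hpos)) (le_of_lt hpos)
              · rw [← h0]; simp
          _ = c := by rw [← Finset.sum_mul, G.δ_sum s a ha, one_mul]
      unfold SG.bellman
      rw [if_neg hsF, if_neg hsZ]
      split_ifs with hbox
      · apply Finset.sup'_le
        intro a ha
        by_cases hexit : ∃ t, 0 < G.δ s a t ∧ t ∉ Y
        · calc ∑ t, G.δ s a t * x n t ≤ ∑ t, G.δ s a t * f t :=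
                Finset.sum_le_sum fun t _ =>
                  mul_le_mul_of_nonneg_left ((hxV n t).trans (hfV t)) (G.δ_nonneg s a t)
            _ ≤ c := hbest s hs hbox a ha hexit
        · push_neg at hexit
          exact hin a ha hexit
      · obtain ⟨a, haB, haAv⟩ := hact s hs
        exact le_trans (Finset.inf'_le _ haAv)
          (hin a haAv fun t ht => hstayY s hs a haB haAv t ht)
  intro s hs
  exact (hVL s).trans (ciSup_le fun n => hkey n s hs)
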